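/- arXiv:math/9503231 — 3 statements merged into one kernel-verified Lean document; each statement's English description precedes it below -/
import Mathlib

section
/- Let q = 2^(2n+1), θ = 2^(n+1), and S = {M(a,b) : a, b ∈ F_q} where M(a,b) is the 3×3 matrix with rows (1,0,0), (a^θ,1,0), (b,a,1). If x ∈ S satisfies x² = 1 and x ≠ 1, then x = M(0,b) for some nonzero b; in particular every involution of S lies in the center {M(0,b) : b ∈ F_q}. -/
/-- The matrix `M(a,b)` generating the Sylow 2-subgroup of the Suzuki group
`Sz(2^(2n+1))`. -/
noncomputable def SzM (n : ℕ) (a b : GaloisField 2 (2 * n + 1)) :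
    Matrix (Fin 3) (Fin 3) (GaloisField 2 (2 * n + 1)) :=
  !![1, 0, 0; a ^ (2 ^ (n + 1)), 1, 0; b, a, 1]

/-- The Sylow 2-subgroup of `Sz(2^(2n+1))` as a set of matrices. -/
noncomputable def SzSyl (n : ℕ) : Set (Matrix (Fin 3) (Fin 3) (GaloisField 2 (2 * n + 1))) :=
  {x | ∃ a b, x = SzM n a b}

theorem SzSyl_involutions_central (n : ℕ)
    (x : Matrix (Fin 3) (Fin 3) (GaloisField 2 (2 * n + 1)))
    (hx : x ∈ SzSyl n) (hsq : x ^ 2 = 1) (hne : x ≠ 1) :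
    ∃ b : GaloisField 2 (2 * n + 1), b ≠ 0 ∧ x = SzM n 0 b := by
  obtain ⟨a, b, rfl⟩ := hx
  have hM10 : SzM n (0 : GaloisField 2 (2 * n + 1)) 0 = 1 := by
    simp [SzM, zero_pow (pow_ne_zero (n + 1) (two_ne_zero)), ← Matrix.one_fin_three]
  have h20 : (SzM n a b ^ 2) 2 0 = 0 := by
    rw [hsq]; simp [Matrix.one_apply]
  rw [sq, Matrix.mul_apply, Fin.sum_univ_three] at h20
  simp only [SzM] at h20
  norm_num [Matrix.cons_val_zero, Matrix.cons_val_one, Matrix.head_cons,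
    Matrix.cons_val_fin_one, Matrix.cons_val', Matrix.empty_val'] at h20
  simp only [Matrix.cons_val, one_mul] at h20
  haveI : CharP (GaloisField 2 (2 * n + 1)) 2 := inferInstance
  have h2 : (2 : GaloisField 2 (2 * n + 1)) = 0 := by
    exact_mod_cast CharP.cast_eq_zero (GaloisField 2 (2 * n + 1)) 2
  have hab : a * a ^ (2 ^ (n + 1)) = 0 := by
    have : b + a * a ^ (2 ^ (n + 1)) + b
        = a * a ^ (2 ^ (n + 1)) + 2 * b := by ring
    rw [this, h2, zero_mul, add_zero] at h20
    exact h20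
  have ha : a = 0 := by
    rcases mul_eq_zero.mp hab with h | h
    · exact h
    · exact pow_eq_zero_iff (pow_ne_zero (n + 1) (two_ne_zero)) |>.mp h
  subst ha
  refine ⟨b, fun hb => hne ?_, rfl⟩
  rw [hb, hM10]
end

section
/- Let ρ ∈ F_(2^(2n)) have multiplicative order exactly 2^n + 1 and set λ = ρ + ρ^(2^n). If l divides n and λ ∈ F_(2^l), then l = n. Consequently {1, λ, λ², ..., λ^(n-1)} is a basis of F_(2^n) over F_2. -/
open Polynomial

theorem lambda_generates (n : ℕ) (hn : 1 ≤ n)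
    (ρ : GaloisField 2 (2 * n)) (hρ : orderOf ρ = 2 ^ n + 1) :
    (∀ l : ℕ, 0 < l → l ∣ n →
        (ρ + ρ ^ (2 ^ n)) ^ (2 ^ l) = ρ + ρ ^ (2 ^ n) → l = n) ∧
    LinearIndependent (ZMod 2) (fun i : Fin n => (ρ + ρ ^ (2 ^ n)) ^ (i : ℕ)) ∧
    (∀ x : GaloisField 2 (2 * n), x ^ (2 ^ n) = x →
        x ∈ Submodule.span (ZMod 2)
          (Set.range fun i : Fin n => (ρ + ρ ^ (2 ^ n)) ^ (i : ℕ))) := by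
  classical
  set lam := ρ + ρ ^ (2 ^ n) with hlam
  -- Part 1
  have part1 : ∀ l : ℕ, 0 < l → l ∣ n → lam ^ (2 ^ l) = lam → l = n := by
    intro l hl hln hfix
    have hle : l ≤ n := Nat.le_of_dvd hn hln
    have hρ1 : ρ ^ (2 ^ n + 1) = 1 := hρ ▸ pow_orderOf_eq_one ρ
    have hρne : ρ ≠ 0 := by
      intro h; rw [h, zero_pow (by positivity)] at hρ1; exact zero_ne_one hρ1
    have hquad : ρ ^ 2 + lam * ρ = 1 := by
      rw [hlam, ← hρ1, pow_succ]; ring_nf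
      rw [show (2 : GaloisField 2 (2 * n)) = 0 from CharTwo.two_eq_zero, mul_zero, add_zero]
    have hprod : (ρ ^ (2 ^ l) + ρ) * (ρ ^ (2 ^ l) + ρ ^ (2 ^ n)) = 0 := by
      have expand : (ρ ^ (2 ^ l) + ρ) * (ρ ^ (2 ^ l) + ρ ^ (2 ^ n))
          = (ρ ^ 2 + lam * ρ) ^ (2 ^ l) + ρ ^ (2 ^ n + 1) := by
        rw [add_pow_char_pow, mul_pow, hfix, pow_right_comm, pow_succ, hlam]; ring
      rw [expand, hquad, one_pow, hρ1, CharTwo.add_self_eq_zero]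
    rcases mul_eq_zero.mp hprod with h | h
    · exfalso
      have heq : ρ ^ (2 ^ l) = ρ := by rwa [CharTwo.add_eq_iff_eq_add, zero_add] at h
      have h2 : ρ ^ (2 ^ l - 1) * ρ = 1 * ρ := by
        rw [← pow_succ, one_mul, show 2 ^ l - 1 + 1 = 2 ^ l by
          have : 0 < 2 ^ l := Nat.pos_of_ne_zero (by positivity); omega]
        exact heq
      have h3 : ρ ^ (2 ^ l - 1) = 1 := mul_right_cancel₀ hρne h2
      have h4 : (2 ^ n + 1) ∣ (2 ^ l - 1) := hρ ▸ orderOf_dvd_of_pow_eq_one h3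
      have hl2 : 1 < 2 ^ l := Nat.one_lt_two_pow_iff.mpr (by omega)
      have h5 : 2 ^ n + 1 ≤ 2 ^ l - 1 := Nat.le_of_dvd (by omega) h4
      have h6 : 2 ^ l ≤ 2 ^ n := Nat.pow_le_pow_right (by norm_num) hle
      omega
    · have heq : ρ ^ (2 ^ l) = ρ ^ (2 ^ n) := by
        rwa [CharTwo.add_eq_iff_eq_add, zero_add] at h
      have h2 : ρ ^ (2 ^ l + 1) = 1 := by rw [pow_succ, heq, ← pow_succ]; exact hρ1
      have h4 : (2 ^ n + 1) ∣ (2 ^ l + 1) := hρ ▸ orderOf_dvd_of_pow_eq_one h2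
      have h5 : 2 ^ n + 1 ≤ 2 ^ l + 1 := Nat.le_of_dvd (by positivity) h4
      have h6 : n ≤ l := by
        by_contra hc
        have : 2 ^ l < 2 ^ n := Nat.pow_lt_pow_right (by norm_num) (by omega)
        omega
      omega
  -- whole field identity
  letI : Fintype (GaloisField 2 (2 * n)) := Fintype.ofFinite _
  have hcardF : Fintype.card (GaloisField 2 (2 * n)) = 2 ^ (2 * n) := by
    rw [← Nat.card_eq_fintype_card]; exact GaloisField.card 2 (2 * n) (by omega)
  have hall : ∀ x : GaloisField 2 (2 * n), x ^ (2 ^ (2 * n)) = x := by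
    intro x; rw [← hcardF]; exact FiniteField.pow_card x
  -- lam is fixed by x ↦ x^(2^n)
  have hfixn : lam ^ (2 ^ n) = lam := by
    rw [hlam, add_pow_char_pow, ← pow_mul,
      show 2 ^ n * 2 ^ n = 2 ^ (2 * n) by rw [← pow_add]; congr 1; omega,
      hall ρ, add_comm]
  -- minpoly degree is at least n
  have hint : IsIntegral (ZMod 2) lam := IsIntegral.of_finite _ _
  have hdeg : n ≤ (minpoly (ZMod 2) lam).natDegree := by
    set d' := (minpoly (ZMod 2) lam).natDegree with hd'
    have hd'pos : 0 < d' := minpoly.natDegree_pos hint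
    have hfixd' : lam ^ (2 ^ d') = lam := by
      set E := IntermediateField.adjoin (ZMod 2) {lam} with hE
      have hfr : Module.finrank (ZMod 2) E = d' := IntermediateField.adjoin.finrank hint
      letI : Fintype E := Fintype.ofFinite E
      have hcardE : Fintype.card E = 2 ^ d' := by
        rw [Module.card_eq_pow_finrank (K := ZMod 2) (V := E), hfr]
        norm_num
      set y : E := ⟨lam, IntermediateField.mem_adjoin_simple_self (ZMod 2) lam⟩ with hy
      have hyfix : y ^ (2 ^ d') = y := by rw [← hcardE]; exact FiniteField.pow_card y
      have := congrArg (Subtype.val) hyfix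
      simpa using this
    have hex : ∃ m, 0 < m ∧ lam ^ (2 ^ m) = lam := ⟨d', hd'pos, hfixd'⟩
    obtain ⟨hdpos, hdfix⟩ := Nat.find_spec hex
    have hdle : Nat.find hex ≤ d' := Nat.find_min' hex ⟨hd'pos, hfixd'⟩
    set d := Nat.find hex with hdd
    have hiter : ∀ q : ℕ, lam ^ (2 ^ (d * q)) = lam := by
      intro q; induction q with
      | zero => simp
      | succ k ih =>
        rw [Nat.mul_succ, pow_add, pow_mul, ih, hdfix]
    have hdvd : d ∣ n := by
      have hr : lam ^ (2 ^ (n % d)) = lam := by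
        have h1 : lam ^ (2 ^ (d * (n / d) + n % d)) = lam ^ (2 ^ (n % d)) := by
          rw [pow_add, pow_mul, hiter]
        have h2 : lam ^ (2 ^ (d * (n / d) + n % d)) = lam := by
          have h3 : d * (n / d) + n % d = n := by
            exact Nat.div_add_mod n d
          rw [h3]; exact hfixn
        exact h1.symm.trans h2
      by_contra hc
      have hrpos : 0 < n % d := by
        rcases Nat.eq_zero_or_pos (n % d) with h0 | h0
        · exact absurd (Nat.dvd_of_mod_eq_zero h0) hc
        · exact h0
      exact Nat.find_min hex (m := n % d) (Nat.mod_lt n hdpos) ⟨hrpos, hr⟩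
    have := part1 d hdpos hdvd hdfix
    omega
  -- Part 2 : linear independence
  have part2 : LinearIndependent (ZMod 2) (fun i : Fin n => lam ^ (i : ℕ)) := by
    have h := linearIndependent_pow (K := ZMod 2) lam
    have h2 := h.comp (Fin.castLE hdeg) (Fin.castLE_injective hdeg)
    convert h2 using 2
    rfl
  -- Part 3 : spanning
  have part3 : ∀ x : GaloisField 2 (2 * n), x ^ (2 ^ n) = x →
      x ∈ Submodule.span (ZMod 2) (Set.range fun i : Fin n => lam ^ (i : ℕ)) := by
    intro x hx
    set V := Submodule.span (ZMod 2) (Set.range fun i : Fin n => lam ^ (i : ℕ)) with hV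
    set T : Submodule (ZMod 2) (GaloisField 2 (2 * n)) :=
      { carrier := {z | z ^ (2 ^ n) = z}
        add_mem' := by
          intro a b ha hb
          simp only [Set.mem_setOf_eq] at *
          rw [add_pow_char_pow, ha, hb]
        zero_mem' := by simp [zero_pow (pow_ne_zero n (two_ne_zero))]
        smul_mem' := by
          intro c z hz
          have hc : c = 0 ∨ c = 1 := by revert c; decide
          rcases hc with rfl | rfl
          · simp
          · simpa using hz } with hT
    have hsub : V ≤ T := by
      rw [hV, Submodule.span_le]
      rintro _ ⟨i, rfl⟩
      show (lam ^ (i : ℕ)) ^ (2 ^ n) = lam ^ (i : ℕ)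
      rw [pow_right_comm, hfixn]
    letI : Fintype V := Fintype.ofFinite V
    have hcardV : Fintype.card V = 2 ^ n := by
      have b := Module.Basis.span part2
      rw [Module.card_fintype b]
      simp
    have hPne : (X ^ (2 ^ n) - X : (GaloisField 2 (2 * n))[X]) ≠ 0 := by
      intro h0
      have hnd := FiniteField.X_pow_card_pow_sub_X_natDegree_eq (GaloisField 2 (2 * n))
        (p := 2) (n := n) (by omega) (by norm_num)
      rw [h0] at hnd
      simp only [natDegree_zero] at hnd
      have : 0 < 2 ^ n := by positivity
      omega
    have hTsub : (T : Set (GaloisField 2 (2 * n))) ⊆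
        ((X ^ (2 ^ n) - X : (GaloisField 2 (2 * n))[X]).roots.toFinset :
          Set (GaloisField 2 (2 * n))) := by
      intro z hz
      have hz' : z ^ (2 ^ n) = z := hz
      simp only [Multiset.mem_toFinset, Finset.mem_coe]
      rw [mem_roots hPne]
      simp [IsRoot, hz']
    have hTfin : (T : Set (GaloisField 2 (2 * n))).Finite := Set.toFinite _
    have hTcard : (T : Set (GaloisField 2 (2 * n))).ncard ≤ 2 ^ n := by
      calc (T : Set (GaloisField 2 (2 * n))).ncard
          ≤ ((X ^ (2 ^ n) - X : (GaloisField 2 (2 * n))[X]).roots.toFinset :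
              Set (GaloisField 2 (2 * n))).ncard :=
            Set.ncard_le_ncard hTsub (Set.toFinite _)
        _ = (X ^ (2 ^ n) - X : (GaloisField 2 (2 * n))[X]).roots.toFinset.card :=
            Set.ncard_coe_finset _
        _ ≤ Multiset.card (X ^ (2 ^ n) - X : (GaloisField 2 (2 * n))[X]).roots :=
            Multiset.toFinset_card_le _
        _ ≤ (X ^ (2 ^ n) - X : (GaloisField 2 (2 * n))[X]).natDegree :=
            Polynomial.card_roots' _
        _ = 2 ^ n := FiniteField.X_pow_card_pow_sub_X_natDegree_eq _ (by omega) (by norm_num)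
    have hVcard : (V : Set (GaloisField 2 (2 * n))).ncard = 2 ^ n := by
      rw [← Nat.card_coe_set_eq]
      have h1 : Nat.card ↥V = 2 ^ n := by rw [Nat.card_eq_fintype_card, hcardV]
      exact h1
    have hVT : (V : Set (GaloisField 2 (2 * n))) = (T : Set (GaloisField 2 (2 * n))) :=
      Set.eq_of_subset_of_ncard_le hsub (by omega) hTfin
    have hxT : x ∈ (T : Set (GaloisField 2 (2 * n))) := hx
    rw [← hVT] at hxT
    exact hxT
  exact ⟨part1, part2, part3⟩
end

section
/- Let G be a finite group whose order is even, and suppose a Sylow 2-subgroup of G is cyclic and nontrivial. Then G has a normal subgroup of index 2^k where 2^k is the order of the Sylow 2-subgroup; in particular, if |G| > 2 then G is not simple. -/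
theorem cyclic_sylow_two_normal_complement (G : Type*) [Group G] [Finite G]
    (hEven : Even (Nat.card G)) (P : Sylow 2 G)
    (hcyc : IsCyclic P) (hnt : (P : Subgroup G) ≠ ⊥) :
    (∃ N : Subgroup G, N.Normal ∧ N.index = Nat.card P) ∧
    (2 < Nat.card G → ¬ IsSimpleGroup G) := by
  have hp : Fact (Nat.Prime 2) := ⟨Nat.prime_two⟩
  -- P is commutative since cyclic
  have hPcomm : IsMulCommutative (P : Subgroup G) := by
    letI := hcyc.commGroup
    exact ⟨⟨fun a b => mul_comm a b⟩⟩
  -- the key: normalizer ≤ centralizer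
  have hP : Subgroup.normalizer ((P : Subgroup G) : Set G) ≤ Subgroup.centralizer (P : Set G) := by
    set N := Subgroup.normalizer ((P : Subgroup G) : Set G) with hN
    set f := (P : Subgroup G).normalizerMonoidHom with hf
    have hker : f.ker = (Subgroup.centralizer (P : Set G)).subgroupOf N :=
      Subgroup.normalizerMonoidHom_ker (P : Subgroup G)
    -- index of ker in N = card of range, divides card (MulAut P) = 2 ^ (n-1)
    have hcardP : ∃ n : ℕ, Nat.card P = 2 ^ n := IsPGroup.iff_card.mp P.2
    obtain ⟨n, hn⟩ := hcardP
    have hdvd1 : f.ker.index ∣ 2 ^ n := by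
      have h1 : f.ker.index = Nat.card f.range := f.ker.index_eq_card.trans
        (Nat.card_congr (QuotientGroup.quotientKerEquivRange f).toEquiv)
      have h2 : Nat.card f.range ∣ Nat.card (MulAut P) :=
        Subgroup.card_subgroup_dvd_card f.range
      have h3 : Nat.card (MulAut (P : Subgroup G)) = Nat.totient (Nat.card P) :=
        IsCyclic.card_mulAut _
      rw [h1]
      refine h2.trans ?_
      rw [h3, hn]
      rcases Nat.eq_zero_or_pos n with h0 | h0
      · simp [h0]
      · rw [Nat.totient_prime_pow Nat.prime_two h0]
        simpa using pow_dvd_pow 2 (Nat.pred_le n)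
    -- ker contains P (as subgroup of N), so its index divides [N : P] which divides [G:P], odd
    have hPle : (P : Subgroup G).subgroupOf N ≤ f.ker := by
      rw [hker]
      intro x hx
      simp only [Subgroup.mem_subgroupOf] at hx ⊢
      exact Subgroup.le_centralizer (P : Subgroup G) hx
    have hdvd2 : f.ker.index ∣ ((P : Subgroup G).subgroupOf N).index :=
      Subgroup.index_dvd_of_le hPle
    have hodd : ¬ 2 ∣ ((P : Subgroup G).subgroupOf N).index := by
      intro h2
      apply P.not_dvd_index
      exact h2.trans (Subgroup.relIndex_dvd_index_of_le Subgroup.le_normalizer)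
    -- k.index divides 2^n and an odd number, so = 1
    have hone : f.ker.index = 1 := by
      by_contra h1
      have h2 : 2 ∣ f.ker.index := by
        rcases (Nat.dvd_prime_pow Nat.prime_two).mp hdvd1 with ⟨k, hk, hkeq⟩
        rcases Nat.eq_zero_or_pos k with rfl | hkpos
        · simp only [pow_zero] at hkeq; exact absurd hkeq h1
        · exact hkeq ▸ dvd_pow_self 2 hkpos.ne'
      exact hodd (h2.trans hdvd2)
    have : f.ker = ⊤ := Subgroup.index_eq_one.mp hone
    rw [hker, Subgroup.subgroupOf_eq_top] at this
    exact this
  -- Burnside's transfer theorem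
  have hcomp := MonoidHom.ker_transferSylow_isComplement' P hP
  set K := (MonoidHom.transferSylow P hP).ker with hK
  have hidx : K.index = Nat.card P := hcomp.symm.index_eq_card
  refine ⟨⟨K, MonoidHom.normal_ker _, hidx⟩, ?_⟩
  intro hlt hsimple
  have hcardP : 1 < Nat.card P := (Subgroup.one_lt_card_iff_ne_bot (P : Subgroup G)).mpr hnt
  haveI := hsimple
  rcases (MonoidHom.normal_ker _ : K.Normal).eq_bot_or_eq_top with hbot | htop
  all_goals rw [← hK] at *
  · -- K = ⊥ means |G| = |P|, so P = ⊤ and G is cyclic, hence abelian simple ⇒ prime order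
    have : K.index = Nat.card G := by rw [hbot, Subgroup.index_bot]
    have hcard : Nat.card G = Nat.card P := by rw [← this, hidx]
    have hPtop : (P : Subgroup G) = ⊤ := by
      have := Subgroup.card_eq_iff_eq_top (P : Subgroup G)
      exact this.mp hcard.symm
    letI : IsCyclic G := by
      have e : G ≃* (P : Subgroup G) := (Subgroup.topEquiv.symm.trans
        (MulEquiv.subgroupCongr hPtop.symm))
      exact isCyclic_of_surjective e.symm e.symm.surjective
    letI : CommGroup G := IsCyclic.commGroup
    have hprime : (Nat.card G).Prime := IsSimpleGroup.prime_card
    have : Nat.card G = 2 := (Nat.Prime.even_iff hprime).mp hEven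
    omega
  · rw [htop, Subgroup.index_top] at hidx
    omega
end
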